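/- Let H be a real Hilbert space and let Γ be a monoid acting on H such that for each g ∈ Γ the map v ↦ g·v is an isometry of H (it preserves distances; surjectivity is not assumed). If some orbit {g·v₀ : g ∈ Γ} is bounded, then there exists a point p ∈ H fixed by every element of Γ, i.e., g·p = p for all g ∈ Γ. -/

import Mathlib

private lemma bt_mid_dist_sq {H : Type*} [NormedAddCommGroup H] [InnerProductSpace ℝ H]
    (a b c : H) : dist c (midpoint ℝ a b) ^ 2
      = (dist c a ^ 2 + dist c b ^ 2) / 2 - dist a b ^ 2 / 4 := by
  have h := EuclideanGeometry.dist_sq_add_dist_sq_eq_two_mul_dist_midpoint_sq_add_half_dist_sq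
    c a b
  nlinarith [h]

private lemma bt_eq_midpoint {H : Type*} [NormedAddCommGroup H] [InnerProductSpace ℝ H]
    (a b m : H) (ha : dist m a = dist a b / 2) (hb : dist m b = dist a b / 2) :
    m = midpoint ℝ a b := by
  have h := bt_mid_dist_sq a b m
  rw [ha, hb] at h
  have h0 : dist m (midpoint ℝ a b) ^ 2 = 0 := by rw [h]; ring
  have := pow_eq_zero_iff (n := 2) (by norm_num) |>.mp h0
  exact dist_eq_zero.mp this

/-- **Bruhat–Tits center lemma, semigroup version**: a monoid acting on a real Hilbert space
by (not necessarily surjective) distance-preserving maps with a bounded orbit has a global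
fixed point. -/
theorem bruhat_tits_monoid
    {H : Type*} [NormedAddCommGroup H] [InnerProductSpace ℝ H] [CompleteSpace H]
    {Γ : Type*} [Monoid Γ]
    (act : Γ → H → H)
    (hact_one : ∀ v, act 1 v = v)
    (hact_mul : ∀ f g v, act (f * g) v = act f (act g v))
    (hiso : ∀ g a b, dist (act g a) (act g b) = dist a b)
    (v₀ : H) (hbdd : Bornology.IsBounded (Set.range fun g => act g v₀)) :
    ∃ p : H, ∀ g, act g p = p := by
  classical
  obtain ⟨C, hC⟩ := hbdd.subset_closedBall v₀
  have horb : ∀ g : Γ, dist (act g v₀) v₀ ≤ C := by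
    intro g
    have := hC ⟨g, rfl⟩
    simpa [Metric.mem_closedBall] using this
  -- the action preserves midpoints
  have hmid : ∀ (g : Γ) (x y : H),
      act g (midpoint ℝ x y) = midpoint ℝ (act g x) (act g y) := by
    intro g x y
    refine bt_eq_midpoint _ _ _ ?_ ?_
    · rw [hiso, dist_midpoint_left, hiso]
      norm_num
      ring
    · rw [hiso, dist_midpoint_right, hiso]
      norm_num
      ring
  set F : H → Γ → ℝ := fun x g => dist (act g x) v₀ ^ 2 with hF
  have hbddF : ∀ x : H, BddAbove (Set.range (F x)) := by
    intro x
    refine ⟨(dist x v₀ + C) ^ 2, ?_⟩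
    rintro - ⟨g, rfl⟩
    have h1 : dist (act g x) v₀ ≤ dist x v₀ + C := by
      calc dist (act g x) v₀ ≤ dist (act g x) (act g v₀) + dist (act g v₀) v₀ :=
            dist_triangle _ _ _
        _ ≤ dist x v₀ + C := by rw [hiso]; exact add_le_add_right (horb g) _
    exact pow_le_pow_left₀ dist_nonneg h1 2
  set q : H → ℝ := fun x => ⨆ g, F x g with hq
  have hq_ge : ∀ (x : H) (g : Γ), F x g ≤ q x := fun x g => le_ciSup (hbddF x) g
  have hq_nonneg : ∀ x, 0 ≤ q x := fun x => le_trans (sq_nonneg _) (hq_ge x 1)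
  -- strong convexity along midpoints
  have hq_mid : ∀ x y : H,
      q (midpoint ℝ x y) ≤ (q x + q y) / 2 - dist x y ^ 2 / 4 := by
    intro x y
    refine ciSup_le fun g => ?_
    have h1 : F (midpoint ℝ x y) g = (F x g + F y g) / 2 - dist x y ^ 2 / 4 := by
      show dist (act g (midpoint ℝ x y)) v₀ ^ 2 = _
      rw [hmid, dist_comm, bt_mid_dist_sq, hiso]
      simp only [hF]
      rw [dist_comm v₀ (act g x), dist_comm v₀ (act g y)]
    rw [h1]
    have := hq_ge x g
    have := hq_ge y g
    linarith
  -- monotonicity under the action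
  have hq_inv : ∀ (h : Γ) (x : H), q (act h x) ≤ q x := by
    intro h x
    refine ciSup_le fun g => ?_
    have h1 : F (act h x) g = F x (g * h) := by
      simp only [hF, hact_mul]
    rw [h1]; exact hq_ge x (g * h)
  -- minimize q
  set m : ℝ := sInf (Set.range q) with hm
  have hbddq : BddBelow (Set.range q) := ⟨0, by rintro - ⟨x, rfl⟩; exact hq_nonneg x⟩
  have hm_le : ∀ x, m ≤ q x := fun x => csInf_le hbddq ⟨x, rfl⟩
  have hseq : ∀ n : ℕ, ∃ x : H, q x < m + 1 / (n + 1) := by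
    intro n
    have hlt : m < m + 1 / (n + 1) := by
      have : (0 : ℝ) < 1 / (n + 1) := by positivity
      linarith
    obtain ⟨-, ⟨x, rfl⟩, hx⟩ := exists_lt_of_csInf_lt (Set.range_nonempty (f := q) (h := ⟨v₀⟩)) hlt
    exact ⟨x, hx⟩
  choose x hx using hseq
  have hdist : ∀ n k : ℕ, dist (x n) (x k) ^ 2 ≤ 2 * (1 / (n + 1) + 1 / (k + 1)) := by
    intro n k
    have h1 := hq_mid (x n) (x k)
    have h2 := hm_le (midpoint ℝ (x n) (x k))
    have h3 := hx n
    have h4 := hx k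
    linarith
  have hcauchy : CauchySeq x := by
    rw [Metric.cauchySeq_iff']
    intro ε hε
    obtain ⟨N, hN⟩ := exists_nat_one_div_lt (show (0:ℝ) < ε ^ 2 / 4 by positivity)
    refine ⟨N, fun n hn => ?_⟩
    have h1 : (1 : ℝ) / (n + 1) ≤ 1 / (N + 1) := by
      apply one_div_le_one_div_of_le
      · positivity
      · exact_mod_cast by omega
    have h2 := hdist n N
    have h3 : dist (x n) (x N) ^ 2 < ε ^ 2 := by
      have : (1 : ℝ) / (N + 1) < ε ^ 2 / 4 := hN
      nlinarith
    nlinarith [dist_nonneg (x := x n) (y := x N), hε]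
  obtain ⟨p, hp⟩ := cauchySeq_tendsto_of_complete hcauchy
  -- q p ≤ m
  have hqp : q p ≤ m := by
    refine ciSup_le fun g => ?_
    have hcont : Isometry (act g) := Isometry.of_dist_eq (hiso g)
    have h1 : Filter.Tendsto (fun n => F (x n) g) Filter.atTop (nhds (F p g)) := by
      apply Filter.Tendsto.pow
      exact ((hcont.continuous.tendsto p).comp hp).dist tendsto_const_nhds
    have h2 : Filter.Tendsto (fun n : ℕ => m + 1 / ((n : ℝ) + 1)) Filter.atTop (nhds m) := by
      have := tendsto_const_nhds (x := m) (f := Filter.atTop (α := ℕ)) |>.add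
        tendsto_one_div_add_atTop_nhds_zero_nat
      simpa using this
    refine le_of_tendsto_of_tendsto' h1 h2 fun n => ?_
    exact le_trans (hq_ge (x n) g) (hx n).le
  refine ⟨p, fun g => ?_⟩
  have h1 : q (act g p) ≤ m := le_trans (hq_inv g p) hqp
  have h2 := hq_mid p (act g p)
  have h3 := hm_le (midpoint ℝ p (act g p))
  have h4 : dist p (act g p) ^ 2 ≤ 0 := by linarith
  have h5 : dist p (act g p) = 0 := by nlinarith [dist_nonneg (x := p) (y := act g p)]
  exact (dist_eq_zero.mp h5).symm
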